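/- Let H ∈ (1/2, 1) and let s < t be real numbers. Then lim_{δ → 0} ∫_{−∞}^{s} ( ((t+δ−q)^{H−1/2} − (t−q)^{H−1/2}) / δ − (H−1/2)(t−q)^{H−3/2} )² dq = 0, where the limit is over real δ ≠ 0 with t + δ > s. -/

import Mathlib

open Real MeasureTheory Set Filter

lemma aux_integrableOn_Iio_rpow (s t r : ℝ) (hst : s < t) (hr : r < -1) :
    IntegrableOn (fun q => (t - q) ^ r) (Iio s) := by
  have h1 : IntegrableOn (fun x : ℝ => x ^ r) (Ioi (t - s)) :=
    integrableOn_Ioi_rpow_of_lt hr (by linarith)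
  have h2 : Integrable ((Ioi (t - s)).indicator fun x : ℝ => x ^ r) :=
    (integrable_indicator_iff measurableSet_Ioi).mpr h1
  have h3 := h2.comp_sub_left t
  refine h3.integrableOn.congr_fun (fun q hq => ?_) measurableSet_Iio
  rw [mem_Iio] at hq
  simp [indicator_of_mem, mem_Ioi.mpr (by linarith : t - s < t - q)]

lemma aux_mvt (p A B : ℝ) (hp : 0 < p) (hB : 0 < B) (hA : 0 < A) (hAB : A ≠ B)
    (hA2 : B / 2 ≤ A) :
    ∃ ξ : ℝ, B / 2 ≤ ξ ∧ p * ξ ^ (p - 1) = (A ^ p - B ^ p) / (A - B) := by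
  have key : ∀ a b : ℝ, a < b → B / 2 ≤ a →
      ∃ ξ : ℝ, B / 2 ≤ ξ ∧ p * ξ ^ (p - 1) = (b ^ p - a ^ p) / (b - a) := by
    intro a b hab ha
    have ha0 : 0 < a := lt_of_lt_of_le (by linarith) ha
    have hcont : ContinuousOn (fun x : ℝ => x ^ p) (Icc a b) := by
      intro x hx
      exact (Real.continuousAt_rpow_const x p
        (Or.inl (by linarith [hx.1] : x ≠ 0))).continuousWithinAt
    have hderiv : ∀ x ∈ Ioo a b, HasDerivAt (fun x : ℝ => x ^ p) (p * x ^ (p - 1)) x :=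
      fun x hx => Real.hasDerivAt_rpow_const (Or.inl (by linarith [hx.1] : x ≠ 0))
    obtain ⟨ξ, hξ, hξ'⟩ := exists_hasDerivAt_eq_slope (fun x : ℝ => x ^ p)
      (fun x => p * x ^ (p - 1)) hab hcont hderiv
    exact ⟨ξ, by linarith [hξ.1], hξ'⟩
  rcases lt_or_gt_of_ne hAB with h | h
  · obtain ⟨ξ, h1, h2⟩ := key A B h hA2
    refine ⟨ξ, h1, ?_⟩
    rw [h2]
    rw [div_eq_div_iff (by linarith) (by intro hc; apply hAB; linarith)]
    ring
  · obtain ⟨ξ, h1, h2⟩ := key B A h (by linarith)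
    exact ⟨ξ, h1, h2⟩

theorem mean_square_differentiability_kernel (H : ℝ) (hH : H ∈ Set.Ioo (1/2 : ℝ) 1)
    (s t : ℝ) (hst : s < t) :
    Tendsto
      (fun δ : ℝ => ∫ q in Set.Iio s,
        (((t + δ - q) ^ (H - 1/2) - (t - q) ^ (H - 1/2)) / δ
          - (H - 1/2) * (t - q) ^ (H - 3/2))^2)
      (nhdsWithin 0 {δ : ℝ | δ ≠ 0 ∧ s < t + δ})
      (nhds 0) := by
  obtain ⟨hH1, hH2⟩ := hH
  set p : ℝ := H - 1/2 with hpdef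
  have hp0 : 0 < p := by rw [hpdef]; linarith
  have hp1 : p < 1 := by rw [hpdef]; linarith
  set K : ℝ := (2 * p * 2 ^ ((1:ℝ) - p)) ^ 2 with hKdef
  have hbound_int : IntegrableOn (fun q => K * (t - q) ^ (2 * H - 3)) (Iio s) :=
    (aux_integrableOn_Iio_rpow s t (2 * H - 3) hst (by linarith)).const_mul K
  have hmeas : ∀ᶠ δ in nhdsWithin 0 {δ : ℝ | δ ≠ 0 ∧ s < t + δ},
      AEStronglyMeasurable (fun q : ℝ =>
        (((t + δ - q) ^ (H - 1/2) - (t - q) ^ (H - 1/2)) / δ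
          - (H - 1/2) * (t - q) ^ (H - 3/2))^2) (volume.restrict (Iio s)) := by
    filter_upwards [self_mem_nhdsWithin] with δ hδ
    obtain ⟨hδ0, hδt⟩ := hδ
    refine ContinuousOn.aestronglyMeasurable ?_ measurableSet_Iio
    intro q hq
    rw [mem_Iio] at hq
    have c1 : ContinuousAt (fun q : ℝ => (t + δ - q) ^ (H - 1/2)) q :=
      (continuousAt_const.sub continuousAt_id).rpow_const
        (Or.inl (by intro h; simp at h; linarith))
    have c2 : ContinuousAt (fun q : ℝ => (t - q) ^ (H - 1/2)) q :=
      (continuousAt_const.sub continuousAt_id).rpow_const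
        (Or.inl (by intro h; simp at h; linarith))
    have c3 : ContinuousAt (fun q : ℝ => (t - q) ^ (H - 3/2)) q :=
      (continuousAt_const.sub continuousAt_id).rpow_const
        (Or.inl (by intro h; simp at h; linarith))
    exact (((((c1.sub c2).div_const δ).sub (continuousAt_const.mul c3)).pow 2)).continuousWithinAt
  have hsmall : ∀ᶠ δ in nhdsWithin 0 {δ : ℝ | δ ≠ 0 ∧ s < t + δ},
      |δ| < (t - s) / 2 ∧ δ ≠ 0 ∧ s < t + δ := by
    have h1 : ∀ᶠ δ in nhdsWithin 0 {δ : ℝ | δ ≠ 0 ∧ s < t + δ}, |δ| < (t - s) / 2 := by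
      apply Filter.Eventually.filter_mono nhdsWithin_le_nhds
      have := Metric.ball_mem_nhds (0 : ℝ) (by linarith : (0:ℝ) < (t - s) / 2)
      filter_upwards [this] with δ hδ
      simpa [Real.dist_eq] using hδ
    filter_upwards [h1, self_mem_nhdsWithin] with δ h1 h2 using ⟨h1, h2⟩
  have hbound : ∀ᶠ δ in nhdsWithin 0 {δ : ℝ | δ ≠ 0 ∧ s < t + δ},
      ∀ᵐ q ∂(volume.restrict (Iio s)),
        ‖(((t + δ - q) ^ (H - 1/2) - (t - q) ^ (H - 1/2)) / δ
          - (H - 1/2) * (t - q) ^ (H - 3/2))^2‖ ≤ K * (t - q) ^ (2 * H - 3) := by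
    filter_upwards [hsmall] with δ hδ
    obtain ⟨hδs, hδ0, hδt⟩ := hδ
    rw [ae_restrict_iff' measurableSet_Iio]
    refine Eventually.of_forall fun q hq => ?_
    rw [mem_Iio] at hq
    set B : ℝ := t - q with hBdef
    set A : ℝ := t + δ - q with hAdef
    have hB : 0 < B := by rw [hBdef]; linarith
    have hBts : t - s ≤ B := by rw [hBdef]; linarith
    have hA : 0 < A := by rw [hAdef]; linarith
    have hA2 : B / 2 ≤ A := by
      have : -((t-s)/2) ≤ δ := by cases abs_lt.mp hδs; linarith
      rw [hAdef, hBdef]; linarith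
    have hAB : A ≠ B := by rw [hAdef, hBdef]; intro hc; apply hδ0; linarith
    obtain ⟨ξ, hξ1, hξ2⟩ := aux_mvt p A B hp0 hB hA hAB hA2
    have hAmB : A - B = δ := by rw [hAdef, hBdef]; ring
    have hquot : (A ^ p - B ^ p) / δ = p * ξ ^ (p - 1) := by rw [← hAmB, hξ2]
    have hξpos : 0 < ξ := lt_of_lt_of_le (by linarith) hξ1
    -- bounds on the rpow terms
    have hb1 : ξ ^ (p - 1) ≤ (B / 2) ^ (p - 1) :=
      Real.rpow_le_rpow_of_nonpos (by linarith) hξ1 (by linarith)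
    have hb2 : B ^ (p - 1) ≤ (B / 2) ^ (p - 1) :=
      Real.rpow_le_rpow_of_nonpos (by linarith) (by linarith) (by linarith)
    have hhalf : (B / 2) ^ (p - 1) = 2 ^ ((1:ℝ) - p) * B ^ (p - 1) := by
      rw [Real.div_rpow hB.le (by norm_num : (0:ℝ) ≤ 2), div_eq_mul_inv,
        ← Real.rpow_neg (by norm_num : (0:ℝ) ≤ 2)]
      ring_nf
    have hY : |(A ^ p - B ^ p) / δ - p * B ^ (p - 1)|
        ≤ 2 * p * 2 ^ ((1:ℝ) - p) * B ^ (p - 1) := by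
      rw [hquot]
      have h1 : |p * ξ ^ (p - 1) - p * B ^ (p - 1)|
          ≤ p * ξ ^ (p - 1) + p * B ^ (p - 1) := by
        have hx : 0 ≤ p * ξ ^ (p - 1) := by positivity
        have hy : 0 ≤ p * B ^ (p - 1) := by positivity
        rw [abs_sub_comm]
        calc |p * B ^ (p-1) - p * ξ ^ (p-1)| ≤ |p * B ^ (p-1)| + |p * ξ ^ (p-1)| :=
              abs_sub _ _
          _ = p * ξ ^ (p - 1) + p * B ^ (p - 1) := by
              rw [abs_of_nonneg hx, abs_of_nonneg hy]; ring
      calc |p * ξ ^ (p - 1) - p * B ^ (p - 1)| ≤ p * ξ ^ (p - 1) + p * B ^ (p - 1) := h1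
        _ ≤ p * (B/2) ^ (p - 1) + p * (B/2) ^ (p - 1) := by
            gcongr
        _ = 2 * p * 2 ^ ((1:ℝ) - p) * B ^ (p - 1) := by rw [hhalf]; ring
    -- now square
    have heq : (H - 1/2 : ℝ) = p := by rw [hpdef]
    have heq2 : (H - 3/2 : ℝ) = p - 1 := by rw [hpdef]; ring
    rw [Real.norm_eq_abs, abs_of_nonneg (sq_nonneg _), heq, heq2]
    have hsq : (((t + δ - q) ^ p - (t - q) ^ p) / δ - p * (t - q) ^ (p - 1)) ^ 2
        ≤ (2 * p * 2 ^ ((1:ℝ) - p) * B ^ (p - 1)) ^ 2 := by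
      rw [← sq_abs]
      exact pow_le_pow_left₀ (abs_nonneg _) hY 2
    refine le_trans hsq (le_of_eq ?_)
    rw [hKdef, mul_pow, mul_pow]
    congr 1
    rw [← Real.rpow_natCast (B ^ (p - 1)) 2, ← Real.rpow_mul hB.le]
    norm_num
    rw [hpdef]
    ring_nf
  have hlim : ∀ᵐ q ∂(volume.restrict (Iio s)),
      Tendsto (fun δ : ℝ =>
        (((t + δ - q) ^ (H - 1/2) - (t - q) ^ (H - 1/2)) / δ
          - (H - 1/2) * (t - q) ^ (H - 3/2))^2)
        (nhdsWithin 0 {δ : ℝ | δ ≠ 0 ∧ s < t + δ}) (nhds 0) := by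
    rw [ae_restrict_iff' measurableSet_Iio]
    refine Eventually.of_forall fun q hq => ?_
    rw [mem_Iio] at hq
    have hB : (0:ℝ) < t - q := by linarith
    have hd : HasDerivAt (fun δ : ℝ => (t + δ - q) ^ (H - 1/2))
        ((H - 1/2) * (t - q) ^ (H - 1/2 - 1)) 0 := by
      have h1 : HasDerivAt (fun x : ℝ => x ^ (H - 1/2))
          ((H - 1/2) * (t - q) ^ (H - 1/2 - 1)) (t - q) :=
        Real.hasDerivAt_rpow_const (Or.inl hB.ne')
      have h2 : HasDerivAt (fun δ : ℝ => t + δ - q) 1 0 := by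
        simpa using ((hasDerivAt_id (0:ℝ)).const_add t).sub_const q
      have h1' : HasDerivAt (fun x : ℝ => x ^ (H - 1/2))
          ((H - 1/2) * (t - q) ^ (H - 1/2 - 1)) ((fun δ : ℝ => t + δ - q) 0) := by
        simpa using h1
      have := HasDerivAt.comp (h₂ := fun x : ℝ => x ^ (H - 1/2)) 0 h1' h2
      simpa [Function.comp_def] using this
    have hslope := hasDerivAt_iff_tendsto_slope.mp hd
    have hmono : nhdsWithin (0:ℝ) {δ : ℝ | δ ≠ 0 ∧ s < t + δ} ≤ nhdsWithin 0 {(0:ℝ)}ᶜ :=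
      nhdsWithin_mono 0 (fun δ hδ => hδ.1)
    have h3 : Tendsto (fun δ : ℝ => ((t + δ - q) ^ (H - 1/2) - (t - q) ^ (H - 1/2)) / δ)
        (nhdsWithin 0 {δ : ℝ | δ ≠ 0 ∧ s < t + δ})
        (nhds ((H - 1/2) * (t - q) ^ (H - 1/2 - 1))) := by
      have := hslope.mono_left hmono
      refine this.congr fun δ => ?_
      simp [slope_def_field]
    have h4 := h3.sub_const ((H - 1/2) * (t - q) ^ (H - 3/2))
    have h5 : (H - 1/2) * (t - q) ^ (H - 1/2 - 1) - (H - 1/2) * (t - q) ^ (H - 3/2) = 0 := by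
      have he : H - 1/2 - 1 = H - 3/2 := by ring
      rw [he, sub_self]
    rw [h5] at h4
    have := h4.pow 2
    simpa using this
  have main := tendsto_integral_filter_of_dominated_convergence
    (fun q => K * (t - q) ^ (2 * H - 3)) hmeas hbound hbound_int hlim
  simpa only [MeasureTheory.integral_zero] using main
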